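/- arXiv:2209.14462 — 13 statements merged into one kernel-verified Lean document; each statement's English description precedes it below -/
import Mathlib

section
/- Let ρ ∈ (0,1], ε_u, ε_s ≥ 0, and let x̄, p̄, μ̄ : [0,∞) → ℝ. Assume (ε_u-UIC) for all v, b ≥ 0: v·x̄(v) − p̄(v) ≥ v·x̄(b) − p̄(b) − ε_u; and (ε_s-SCP for a coalition of a ρ-fraction of miners and one user with true value y) for all 0 ≤ y ≤ z: y·x̄(y) − p̄(y) + ρ·μ̄(y) + ε_s ≥ y·x̄(z) − p̄(z) + ρ·μ̄(z). Then for all 0 ≤ y ≤ z: μ̄(z) − μ̄(y) ≤ (1/ρ)·(ε_u + ε_s + (z − y)·(x̄(z) − x̄(y))). -/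
/-- Per-step bound on the change of expected miner revenue implied by
ε_u-UIC together with ε_s-SCP for a coalition of a ρ-fraction of the
miners and one user (averaged single-user view of a TFM). -/
theorem miner_step_eps_UIC
    (ρ εu εs : ℝ) (hρ0 : 0 < ρ) (hρ1 : ρ ≤ 1) (hεu : 0 ≤ εu) (hεs : 0 ≤ εs)
    (xbar pbar mubar : ℝ → ℝ)
    (hUIC : ∀ v b : ℝ, 0 ≤ v → 0 ≤ b →
      v * xbar v - pbar v ≥ v * xbar b - pbar b - εu)
    (hSCP : ∀ y z : ℝ, 0 ≤ y → y ≤ z →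
      y * xbar y - pbar y + ρ * mubar y + εs ≥ y * xbar z - pbar z + ρ * mubar z) :
    ∀ y z : ℝ, 0 ≤ y → y ≤ z →
      mubar z - mubar y ≤ (1 / ρ) * (εu + εs + (z - y) * (xbar z - xbar y)) := by
  intro y z hy hyz
  have h1 := hSCP y z hy hyz
  have h2 := hUIC z y (hy.trans hyz) hy
  rw [one_div, inv_mul_eq_div, le_div_iff₀ hρ0]
  nlinarith
end

section
/- Let D be a Borel probability measure on [0,∞) with C_D := ∫√x dD(x) < ∞, let ρ ∈ (0,1], let ε_u, ε_s, ε_m ≥ 0, set ε' = ε_u + ε_s and ε = ε_u + ε_s + ε_m. For each integer ℓ ≥ 0 let μ_ℓ : [0,∞)^ℓ → ℝ be measurable and D^ℓ-integrable with μ_0 = 0, and assume: (i) for every ℓ ≥ 0, ∫ μ_{ℓ+1}(b, 0) dD^ℓ(b) ≤ ∫ μ_ℓ(b) dD^ℓ(b) + ε_m/ρ (the consequence of Bayesian ε_m-MIC: a ρ-fraction miner coalition injecting a zero bid gains at most ε_m); (ii) for every n ≥ 1 and every r ≥ 0, ∫ μ_n(b', r) dD^{n−1}(b') − ∫ μ_n(b',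 0) dD^{n−1}(b') ≤ (2/ρ)·ε' if r ≤ ε' and ≤ (2/ρ)·√(r·ε') if r > ε' (the per-user revenue-change bound implied by Bayesian ε_u-UIC and Bayesian ε_s-SCP against (ρ,1)-sized coalitions). Then for every n ≥ 0: ∫ μ_n dD^n ≤ (2n/ρ)·(ε + C_D·√ε). -/
open MeasureTheory

lemma miner_snoc_eq {n : ℕ} (r : ℝ) (b : Fin n → ℝ) :
    (MeasurableEquiv.piFinSuccAbove (fun _ : Fin (n+1) => ℝ) (Fin.last n)).symm (r, b)
      = Fin.snoc b r := by
  simp [MeasurableEquiv.piFinSuccAbove, Fin.insertNthEquiv_last, Fin.snocEquiv]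

lemma miner_decomp (D : Measure ℝ) [IsProbabilityMeasure D] (n : ℕ)
    (f : (Fin (n+1) → ℝ) → ℝ) (hf : Integrable f (Measure.pi fun _ : Fin (n+1) => D)) :
    (∫ b, f b ∂(Measure.pi fun _ : Fin (n+1) => D))
      = ∫ r, ∫ b, f (Fin.snoc b r) ∂(Measure.pi fun _ : Fin n => D) ∂D := by
  have hmp := measurePreserving_piFinSuccAbove (fun _ : Fin (n+1) => D) (Fin.last n)
  set e := MeasurableEquiv.piFinSuccAbove (fun _ : Fin (n+1) => ℝ) (Fin.last n)
  have h1 : (∫ b, f b ∂(Measure.pi fun _ : Fin (n+1) => D))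
      = ∫ z, f (e.symm z) ∂(D.prod (Measure.pi fun _ : Fin n => D)) :=
    ((hmp.symm e).integral_comp e.symm.measurableEmbedding f).symm
  have hI : Integrable (fun z => f (e.symm z)) (D.prod (Measure.pi fun _ : Fin n => D)) :=
    (hmp.symm e).integrable_comp_emb e.symm.measurableEmbedding |>.mpr hf
  rw [h1, integral_prod _ hI]
  congr 1; ext r; congr 1; ext b
  rw [miner_snoc_eq]

lemma miner_decomp_int (D : Measure ℝ) [IsProbabilityMeasure D] (n : ℕ)
    (f : (Fin (n+1) → ℝ) → ℝ) (hf : Integrable f (Measure.pi fun _ : Fin (n+1) => D)) :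
    Integrable (fun r => ∫ b, f (Fin.snoc b r) ∂(Measure.pi fun _ : Fin n => D)) D := by
  have hmp := measurePreserving_piFinSuccAbove (fun _ : Fin (n+1) => D) (Fin.last n)
  set e := MeasurableEquiv.piFinSuccAbove (fun _ : Fin (n+1) => ℝ) (Fin.last n)
  have hI : Integrable (fun z => f (e.symm z)) (D.prod (Measure.pi fun _ : Fin n => D)) :=
    (hmp.symm e).integrable_comp_emb e.symm.measurableEmbedding |>.mpr hf
  have := hI.integral_prod_left
  convert this using 2 with r
  congr 1; ext b; rw [miner_snoc_eq]

/-- Limit on expected miner revenue for approximately incentive compatible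
MPC-assisted transaction fee mechanisms: if (i) injecting a zero bid gains the
miner coalition at most ε_m/ρ on average, and (ii) raising any single user's
bid from 0 to r changes the expected miner revenue by at most (2/ρ)ε' when
r ≤ ε' and at most (2/ρ)√(rε') when r > ε' (where ε' = ε_u + ε_s), then the
expected total miner revenue over n i.i.d. bids from D is at most
(2n/ρ)(ε + C_D√ε), where ε = ε_u + ε_s + ε_m and C_D = ∫ √x dD. -/
theorem miner_revenue_limit
    (D : Measure ℝ) [IsProbabilityMeasure D]
    (hD : D (Set.Iio 0) = 0)
    (hsqrt : Integrable (fun x => Real.sqrt x) D)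
    (ρ εu εs εm : ℝ) (hρ0 : 0 < ρ) (hρ1 : ρ ≤ 1)
    (hεu : 0 ≤ εu) (hεs : 0 ≤ εs) (hεm : 0 ≤ εm)
    (μ : (ℓ : ℕ) → (Fin ℓ → ℝ) → ℝ)
    (hmeas : ∀ ℓ, Measurable (μ ℓ))
    (hint : ∀ ℓ, Integrable (μ ℓ) (Measure.pi fun _ : Fin ℓ => D))
    (hzero : ∀ b : Fin 0 → ℝ, μ 0 b = 0)
    (hMIC : ∀ ℓ : ℕ,
      (∫ b, μ (ℓ + 1) (Fin.snoc b 0) ∂(Measure.pi fun _ : Fin ℓ => D))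
        ≤ (∫ b, μ ℓ b ∂(Measure.pi fun _ : Fin ℓ => D)) + εm / ρ)
    (hstep : ∀ n : ℕ, ∀ r : ℝ, 0 ≤ r →
      (∫ b, μ (n + 1) (Fin.snoc b r) ∂(Measure.pi fun _ : Fin n => D))
          - (∫ b, μ (n + 1) (Fin.snoc b 0) ∂(Measure.pi fun _ : Fin n => D))
        ≤ if r ≤ εu + εs then (2 / ρ) * (εu + εs)
          else (2 / ρ) * Real.sqrt (r * (εu + εs))) :
    ∀ n : ℕ,
      (∫ b, μ n b ∂(Measure.pi fun _ : Fin n => D))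
        ≤ (2 * n / ρ) *
            ((εu + εs + εm) + (∫ x, Real.sqrt x ∂D) * Real.sqrt (εu + εs + εm)) := by
  set C := ∫ x, Real.sqrt x ∂D with hC
  have hC0 : 0 ≤ C := integral_nonneg fun x => Real.sqrt_nonneg x
  set ε' := εu + εs with hε'
  set ε := εu + εs + εm with hεdef
  have hε'0 : 0 ≤ ε' := by positivity
  have hε0 : 0 ≤ ε := by positivity
  have hε'ε : ε' ≤ ε := by simp [hε', hεdef]; linarith
  have hae : ∀ᵐ r ∂D, 0 ≤ r := by
    rw [ae_iff]
    convert hD using 2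
    ext r; simp [Set.Iio]
  intro n
  induction n with
  | zero =>
      simp only [Nat.cast_zero]
      have : (∫ b, μ 0 b ∂(Measure.pi fun _ : Fin 0 => D)) = 0 := by
        simp [hzero]
      rw [this]
      have : 2 * (0:ℝ) / ρ = 0 := by ring
      rw [this, zero_mul]
  | succ n ih =>
      set π := Measure.pi fun _ : Fin n => D with hπ
      set F : ℝ → ℝ := fun r => ∫ b, μ (n+1) (Fin.snoc b r) ∂π with hF
      have hdec : (∫ b, μ (n+1) b ∂(Measure.pi fun _ : Fin (n+1) => D)) = ∫ r, F r ∂D :=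
        miner_decomp D n (μ (n+1)) (hint (n+1))
      have hFint : Integrable F D := miner_decomp_int D n (μ (n+1)) (hint (n+1))
      set g : ℝ → ℝ := fun r => F 0 + (2 / ρ) * ε' + (2 / ρ) * (Real.sqrt r * Real.sqrt ε')
        with hg
      have hgint : Integrable g D := by
        apply Integrable.add (integrable_const _)
        exact ((hsqrt.mul_const (Real.sqrt ε')).const_mul (2 / ρ))
      have hle : ∀ᵐ r ∂D, F r ≤ g r := by
        filter_upwards [hae] with r hr
        have h := hstep n r hr
        have h2ρ : 0 ≤ 2 / ρ := by positivity
        have hbd : (if r ≤ ε' then (2 / ρ) * ε' else (2 / ρ) * Real.sqrt (r * ε'))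
            ≤ (2 / ρ) * ε' + (2 / ρ) * (Real.sqrt r * Real.sqrt ε') := by
          have hpos : 0 ≤ (2 / ρ) * (Real.sqrt r * Real.sqrt ε') := by positivity
          have hpos2 : 0 ≤ (2 / ρ) * ε' := by positivity
          split_ifs with hcase
          · linarith
          · rw [Real.sqrt_mul hr]; linarith
        have : F r - F 0 ≤ (2 / ρ) * ε' + (2 / ρ) * (Real.sqrt r * Real.sqrt ε') :=
          le_trans h hbd
        simp only [hg]; linarith
      have hIg : ∫ r, g r ∂D = F 0 + (2 / ρ) * ε' + (2 / ρ) * (C * Real.sqrt ε') := by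
        rw [hg]
        rw [integral_add (integrable_const _)
          ((hsqrt.mul_const (Real.sqrt ε')).const_mul (2 / ρ))]
        rw [integral_const]
        simp only [probReal_univ, one_smul]
        have : (fun a : ℝ => 2 / ρ * (Real.sqrt a * Real.sqrt ε'))
            = fun a : ℝ => (2 / ρ * Real.sqrt ε') * Real.sqrt a := by
          ext a; ring
        rw [this, integral_const_mul]
        ring
      have hmain : ∫ r, F r ∂D ≤ F 0 + (2 / ρ) * ε' + (2 / ρ) * (C * Real.sqrt ε') := by
        rw [← hIg]
        exact integral_mono_ae hFint hgint hle
      have hF0 : F 0 ≤ (∫ b, μ n b ∂π) + εm / ρ := hMIC n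
      have hsqle : Real.sqrt ε' ≤ Real.sqrt ε := Real.sqrt_le_sqrt hε'ε
      have key : (∫ b, μ (n+1) b ∂(Measure.pi fun _ : Fin (n+1) => D))
          ≤ (∫ b, μ n b ∂π) + (2 / ρ) * (ε + C * Real.sqrt ε) := by
        rw [hdec]
        have h1 : (2 / ρ) * ε' + εm / ρ + (2 / ρ) * (C * Real.sqrt ε')
            ≤ (2 / ρ) * (ε + C * Real.sqrt ε) := by
          have hρinv : 0 ≤ 1 / ρ := by positivity
          have h2 : (2 / ρ) * (C * Real.sqrt ε') ≤ (2 / ρ) * (C * Real.sqrt ε) := by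
            apply mul_le_mul_of_nonneg_left _ (by positivity)
            exact mul_le_mul_of_nonneg_left hsqle hC0
          have h3 : (2 / ρ) * ε' + εm / ρ ≤ (2 / ρ) * ε := by
            rw [div_mul_eq_mul_div, div_mul_eq_mul_div, ← add_div, div_le_div_iff₀ hρ0 hρ0]
            nlinarith
          nlinarith [mul_nonneg (mul_nonneg hC0 (Real.sqrt_nonneg ε)) hρinv]
        linarith [hmain, hF0]
      refine le_trans key ?_
      refine le_trans (add_le_add_left ih _) ?_
      have : 2 * ((n : ℝ) + 1) / ρ = 2 * n / ρ + 2 / ρ := by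
        field_simp
      push_cast
      rw [this, add_mul]
end

section
/- Let f : [0,∞) → ℝ be nondecreasing and let g : [0,∞) → ℝ satisfy g(0) = 0 and, for all 0 ≤ z ≤ z', z·(f(z') − f(z)) ≤ g(z') − g(z) ≤ z'·(f(z') − f(z)). Then for every z ≥ 0, g(z) = z·f(z) − ∫₀^z f(t) dt. -/
/-- Technical lemma implied by the proof of Myerson's lemma: a nondecreasing
allocation-like function f together with a payment-like function g squeezed by
the payment-difference sandwich must equal the unique Myerson payment rule. -/
theorem myerson_sandwich_lemma
    (f g : ℝ → ℝ)
    (hf : ∀ z z' : ℝ, 0 ≤ z → z ≤ z' → f z ≤ f z')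
    (hg0 : g 0 = 0)
    (hsand : ∀ z z' : ℝ, 0 ≤ z → z ≤ z' →
      z * (f z' - f z) ≤ g z' - g z ∧ g z' - g z ≤ z' * (f z' - f z)) :
    ∀ z : ℝ, 0 ≤ z → g z = z * f z - ∫ t in (0:ℝ)..z, f t := by
  -- integrability of f on [a,b] ⊆ [0,∞)
  have hint : ∀ a b : ℝ, 0 ≤ a → a ≤ b → IntervalIntegrable f MeasureTheory.volume a b := by
    intro a b ha hab
    apply MonotoneOn.intervalIntegrable
    intro x hx y hy hxy
    rw [Set.uIcc_of_le hab] at hx hy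
    exact hf x y (ha.trans hx.1) hxy
  set D : ℝ → ℝ := fun w => g w - (w * f w - ∫ t in (0:ℝ)..w, f t) with hD
  have key : ∀ z z' : ℝ, 0 ≤ z → z ≤ z' → |D z' - D z| ≤ (z' - z) * (f z' - f z) := by
    intro z z' hz hzz
    have hz' : 0 ≤ z' := hz.trans hzz
    have hsplit : (∫ t in (0:ℝ)..z, f t) + ∫ t in z..z', f t = ∫ t in (0:ℝ)..z', f t :=
      intervalIntegral.integral_add_adjacent_intervals (hint 0 z le_rfl hz) (hint z z' hz hzz)
    have hlow : (z' - z) * f z ≤ ∫ t in z..z', f t := by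
      have := intervalIntegral.integral_mono_on hzz intervalIntegrable_const (hint z z' hz hzz)
        (fun x hx => hf z x hz hx.1)
      simpa using this
    have hhigh : (∫ t in z..z', f t) ≤ (z' - z) * f z' := by
      have := intervalIntegral.integral_mono_on hzz (hint z z' hz hzz) intervalIntegrable_const
        (fun x hx => hf x z' (hz.trans hx.1) hx.2)
      simpa using this
    obtain ⟨h1, h2⟩ := hsand z z' hz hzz
    rw [abs_le]
    constructor <;> simp only [hD] <;> nlinarith
  intro z hz
  have hD0 : D 0 = 0 := by simp [hD, hg0]
  have bound : ∀ n : ℕ, |D z| ≤ z * (f z - f 0) / (n + 1) := by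
    intro n
    set m : ℕ := n + 1 with hm
    have hm0 : (0 : ℝ) < m := by positivity
    set x : ℕ → ℝ := fun i => i * z / m with hx
    have hx0 : x 0 = 0 := by simp [hx]
    have hxm : x m = z := by simp only [hx]; exact mul_div_cancel_left₀ z hm0.ne'
    have hxnn : ∀ i : ℕ, 0 ≤ x i := by
      intro i; apply div_nonneg _ hm0.le; positivity
    have hxmono : ∀ i : ℕ, x i ≤ x (i + 1) := by
      intro i
      apply div_le_div_of_nonneg_right _ hm0.le
      have : (i : ℝ) ≤ (i : ℝ) + 1 := by linarith
      push_cast; nlinarith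
    have hstep : ∀ i : ℕ, x (i + 1) - x i = z / m := by
      intro i; simp only [hx]; push_cast; ring
    have tele : ∑ i ∈ Finset.range m, (D (x (i + 1)) - D (x i)) = D z := by
      rw [Finset.sum_range_sub (fun i => D (x i)), hx0, hxm, hD0, sub_zero]
    have tele2 : ∑ i ∈ Finset.range m, (z / m) * (f (x (i + 1)) - f (x i))
        = z / m * (f z - f 0) := by
      rw [← Finset.mul_sum, Finset.sum_range_sub (fun i => f (x i)), hx0, hxm]
    calc |D z| = |∑ i ∈ Finset.range m, (D (x (i + 1)) - D (x i))| := by rw [tele]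
      _ ≤ ∑ i ∈ Finset.range m, |D (x (i + 1)) - D (x i)| := Finset.abs_sum_le_sum_abs _ _
      _ ≤ ∑ i ∈ Finset.range m, (z / m) * (f (x (i + 1)) - f (x i)) := by
          apply Finset.sum_le_sum
          intro i _
          have := key (x i) (x (i + 1)) (hxnn i) (hxmono i)
          rwa [hstep i] at this
      _ = z / m * (f z - f 0) := tele2
      _ = z * (f z - f 0) / (n + 1) := by rw [hm]; push_cast; ring
  have hten : Filter.Tendsto (fun n : ℕ => z * (f z - f 0) / (n + 1)) Filter.atTop (nhds 0) := by
    have heq : (fun n : ℕ => z * (f z - f 0) / (n + 1))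
        = (fun n : ℕ => z * (f z - f 0) / n) ∘ (fun n => n + 1) := by
      funext n; simp only [Function.comp_apply]; push_cast; ring
    rw [heq]
    exact (tendsto_const_div_atTop_nhds_zero_nat _).comp (Filter.tendsto_add_atTop_nat 1)
  have hle : |D z| ≤ 0 := ge_of_tendsto' hten (fun n => by
    have := bound n; push_cast at this ⊢; linarith)
  have : D z = 0 := abs_nonpos_iff.mp hle
  simp only [hD] at this
  linarith
end

section
/- Let x : [0,∞) → [0,1] be nondecreasing, define p(b) = b·x(b) − ∫₀^b x(t) dt, let μ : [0,∞) → ℝ, and let ρ ∈ (0,1]. Suppose that for all 0 ≤ r ≤ r': r·(x(r') − x(r)) ≤ (p(r') − ρ·μ(r')) − (p(r) − ρ·μ(r)) ≤ r'·(x(r') − x(r)). Then μ(r) = μ(0) for all r ≥ 0. -/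
/-- Constancy of expected miner revenue in a single user's bid (the paper's
Lemma 'constantRevenue'): if the allocation x is nondecreasing with values in
[0,1], p is the Myerson payment rule, and π(r) = p(r) − ρ·μ(r) satisfies the
payment sandwich, then μ(r) = μ(0) for all r ≥ 0. -/
theorem constant_revenue
    (x p μ : ℝ → ℝ) (ρ : ℝ) (hρ0 : 0 < ρ) (hρ1 : ρ ≤ 1)
    (hx0 : ∀ b : ℝ, 0 ≤ b → 0 ≤ x b)
    (hx1 : ∀ b : ℝ, 0 ≤ b → x b ≤ 1)
    (hmono : ∀ r r' : ℝ, 0 ≤ r → r ≤ r' → x r ≤ x r')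
    (hp : ∀ b : ℝ, p b = b * x b - ∫ t in (0:ℝ)..b, x t)
    (hsand : ∀ r r' : ℝ, 0 ≤ r → r ≤ r' →
      r * (x r' - x r) ≤ (p r' - ρ * μ r') - (p r - ρ * μ r) ∧
      (p r' - ρ * μ r') - (p r - ρ * μ r) ≤ r' * (x r' - x r)) :
    ∀ r : ℝ, 0 ≤ r → μ r = μ 0 := by
  -- integrability of x on [a,b] for 0 ≤ a ≤ b
  have hint : ∀ a b : ℝ, 0 ≤ a → a ≤ b → IntervalIntegrable x MeasureTheory.volume a b := by
    intro a b ha hab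
    apply MonotoneOn.intervalIntegrable
    intro s hs t ht hst
    rw [Set.uIcc_of_le hab] at hs ht
    exact hmono s t (le_trans ha hs.1) hst
  -- key estimate: ρ |μ b - μ a| ≤ (b - a) * (x b - x a)
  have key : ∀ a b : ℝ, 0 ≤ a → a ≤ b → ρ * |μ b - μ a| ≤ (b - a) * (x b - x a) := by
    intro a b ha hab
    have hb : 0 ≤ b := le_trans ha hab
    have hI : IntervalIntegrable x MeasureTheory.volume a b := hint a b ha hab
    have hI0a : IntervalIntegrable x MeasureTheory.volume 0 a := hint 0 a le_rfl ha
    have hsplit : (∫ t in (0:ℝ)..b, x t) = (∫ t in (0:ℝ)..a, x t) + ∫ t in a..b, x t :=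
      (intervalIntegral.integral_add_adjacent_intervals hI0a hI).symm
    -- bounds on ∫_a^b x
    have hlow : (b - a) * x a ≤ ∫ t in a..b, x t := by
      have := intervalIntegral.integral_mono_on hab (intervalIntegrable_const (c := x a)) hI
        (fun t ht => hmono a t ha ht.1)
      simpa [smul_eq_mul] using this
    have hhigh : (∫ t in a..b, x t) ≤ (b - a) * x b := by
      have := intervalIntegral.integral_mono_on hab hI (intervalIntegrable_const (c := x b))
        (fun t ht => hmono t b (le_trans ha ht.1) ht.2)
      simpa [smul_eq_mul] using this
    -- p satisfies the same sandwich
    have hpdiff : p b - p a = b * x b - a * x a - ∫ t in a..b, x t := by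
      rw [hp a, hp b, hsplit]; ring
    have hp_low : a * (x b - x a) ≤ p b - p a := by
      rw [hpdiff]; nlinarith [hhigh]
    have hp_high : p b - p a ≤ b * (x b - x a) := by
      rw [hpdiff]; nlinarith [hlow]
    obtain ⟨hπl, hπh⟩ := hsand a b ha hab
    have h1 : ρ * (μ b - μ a) ≤ (b - a) * (x b - x a) := by nlinarith
    have h2 : -((b - a) * (x b - x a)) ≤ ρ * (μ b - μ a) := by nlinarith
    have habs : |ρ * (μ b - μ a)| ≤ (b - a) * (x b - x a) := abs_le.mpr ⟨h2, h1⟩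
    calc ρ * |μ b - μ a| = |ρ * (μ b - μ a)| := by
          rw [abs_mul, abs_of_pos hρ0]
      _ ≤ _ := habs
  intro r hr
  -- for every n ≥ 1, ρ |μ r - μ 0| ≤ (r / n) * (x r - x 0)
  have main : ∀ n : ℕ, 0 < n → ρ * |μ r - μ 0| ≤ (r / n) * (x r - x 0) := by
    intro n hn
    have hnR : (0:ℝ) < n := Nat.cast_pos.mpr hn
    set t : ℕ → ℝ := fun i => (i : ℝ) * r / n with ht
    have ht0 : t 0 = 0 := by simp [ht]
    have htn : t n = r := by simp only [ht]; exact mul_div_cancel_left₀ r hnR.ne'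
    have htmono : ∀ i : ℕ, t i ≤ t (i + 1) := by
      intro i
      have h1 : (i : ℝ) * r ≤ ((i : ℝ) + 1) * r := by nlinarith
      simp only [ht]
      push_cast
      exact div_le_div_of_nonneg_right h1 hnR.le
    have htnonneg : ∀ i : ℕ, 0 ≤ t i := by
      intro i
      apply div_nonneg _ hnR.le
      positivity
    have htdiff : ∀ i : ℕ, t (i + 1) - t i = r / n := by
      intro i; simp only [ht]; push_cast; field_simp; ring
    have tele_mu : μ r - μ 0 = ∑ i ∈ Finset.range n, (μ (t (i + 1)) - μ (t i)) := by
      rw [Finset.sum_range_sub (fun i => μ (t i)), ht0, htn]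
    have tele_x : ∑ i ∈ Finset.range n, (x (t (i + 1)) - x (t i)) = x r - x 0 := by
      rw [Finset.sum_range_sub (fun i => x (t i)), ht0, htn]
    calc ρ * |μ r - μ 0|
        = ρ * |∑ i ∈ Finset.range n, (μ (t (i + 1)) - μ (t i))| := by rw [tele_mu]
      _ ≤ ρ * ∑ i ∈ Finset.range n, |μ (t (i + 1)) - μ (t i)| := by
          apply mul_le_mul_of_nonneg_left (Finset.abs_sum_le_sum_abs _ _) hρ0.le
      _ = ∑ i ∈ Finset.range n, ρ * |μ (t (i + 1)) - μ (t i)| := Finset.mul_sum _ _ _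
      _ ≤ ∑ i ∈ Finset.range n, (r / n) * (x (t (i + 1)) - x (t i)) := by
          apply Finset.sum_le_sum
          intro i _
          have := key (t i) (t (i + 1)) (htnonneg i) (htmono i)
          rwa [htdiff i] at this
      _ = (r / n) * (x r - x 0) := by rw [← Finset.mul_sum, tele_x]
  -- conclude
  have hnn : 0 ≤ ρ * |μ r - μ 0| := by positivity
  have hzero : ρ * |μ r - μ 0| ≤ 0 := by
    by_contra h
    push_neg at h
    set c := ρ * |μ r - μ 0| with hc
    obtain ⟨n, hn⟩ := exists_nat_gt (r / c)
    have hn0 : 0 < n := by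
      by_contra hn0
      push_neg at hn0
      interval_cases n
      simp at hn
      nlinarith [div_nonneg hr hnn]
    have h1 := main n hn0
    have hx01 : x r - x 0 ≤ 1 := by
      have := hx1 r hr
      have := hx0 0 le_rfl
      linarith
    have hx00 : 0 ≤ x r - x 0 := by
      have := hmono 0 r le_rfl hr; linarith
    have hnR : (0:ℝ) < n := Nat.cast_pos.mpr hn0
    have h2 : (r / n) * (x r - x 0) ≤ r / n := by
      nlinarith [div_nonneg hr hnR.le]
    have h3 : c ≤ r / n := le_trans h1 h2
    have h4 : r / c < n := hn
    have : r < n * c := (div_lt_iff₀ h).mp h4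
    have : c * n ≤ r := (le_div_iff₀ hnR).mp h3
    nlinarith
  have : |μ r - μ 0| = 0 := by
    have := le_antisymm hzero hnn
    have h := mul_eq_zero.mp this
    rcases h with h | h
    · exact absurd h hρ0.ne'
    · exact h
  have := abs_eq_zero.mp this
  linarith
end

section
/- Let ψ : [0,∞) → [0,1] and φ : [0,∞) → ℝ, and suppose that for all a, b ≥ 0 one has φ(b) − φ(a) ≤ (b − a)·(ψ(b) − ψ(a)). Then φ is constant on [0,∞). -/
lemma hartline_key
    (ψ φ : ℝ → ℝ)
    (h : ∀ a b : ℝ, 0 ≤ a → 0 ≤ b → φ b - φ a ≤ (b - a) * (ψ b - ψ a))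
    (a b : ℝ) (ha : 0 ≤ a) (hab : a ≤ b) (n : ℕ) (hn : 0 < n) :
    φ b - φ a ≤ ((b - a) / n) * (ψ b - ψ a) := by
  set d : ℝ := (b - a) / n with hd
  have hn' : (0:ℝ) < n := by exact_mod_cast hn
  have hd0 : 0 ≤ d := div_nonneg (by linarith) hn'.le
  set x : ℕ → ℝ := fun k => a + k * d with hx
  have hx0 : ∀ k, 0 ≤ x k := by
    intro k
    have : (0:ℝ) ≤ k * d := mul_nonneg (Nat.cast_nonneg k) hd0
    simp [hx]; linarith
  have hxn : x n = b := by
    simp only [hx, hd]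
    field_simp
    ring
  have hx0' : x 0 = a := by simp [hx]
  have step : ∀ k, φ (x (k+1)) - φ (x k) ≤ d * (ψ (x (k+1)) - ψ (x k)) := by
    intro k
    have := h (x k) (x (k+1)) (hx0 k) (hx0 (k+1))
    have hdiff : x (k+1) - x k = d := by
      simp only [hx]
      push_cast
      ring
    rwa [hdiff] at this
  have tele1 : ∑ k ∈ Finset.range n, (φ (x (k+1)) - φ (x k)) = φ b - φ a := by
    rw [Finset.sum_range_sub (fun k => φ (x k)), hxn, hx0']
  have tele2 : ∑ k ∈ Finset.range n, (ψ (x (k+1)) - ψ (x k)) = ψ b - ψ a := by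
    rw [Finset.sum_range_sub (fun k => ψ (x k)), hxn, hx0']
  calc φ b - φ a = ∑ k ∈ Finset.range n, (φ (x (k+1)) - φ (x k)) := tele1.symm
    _ ≤ ∑ k ∈ Finset.range n, d * (ψ (x (k+1)) - ψ (x k)) :=
        Finset.sum_le_sum (fun k _ => step k)
    _ = d * (ψ b - ψ a) := by rw [← Finset.mul_sum, tele2]

/-- Partition-and-limit argument at the heart of the paper's Lemma 'hartline'
(following Goldberg–Hartline): if φ(b) − φ(a) ≤ (b − a)·(ψ(b) − ψ(a)) for all
a, b ≥ 0, with ψ taking values in [0,1] on [0,∞), then φ is constant on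
[0,∞). -/
theorem hartline_constancy
    (ψ φ : ℝ → ℝ)
    (hψ0 : ∀ b : ℝ, 0 ≤ b → 0 ≤ ψ b)
    (hψ1 : ∀ b : ℝ, 0 ≤ b → ψ b ≤ 1)
    (h : ∀ a b : ℝ, 0 ≤ a → 0 ≤ b → φ b - φ a ≤ (b - a) * (ψ b - ψ a)) :
    ∀ a b : ℝ, 0 ≤ a → 0 ≤ b → φ a = φ b := by
  -- first prove it when a ≤ b
  have main : ∀ a b : ℝ, 0 ≤ a → a ≤ b → φ a = φ b := by
    intro a b ha hab
    have hb : 0 ≤ b := le_trans ha hab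
    have hψd : ψ b - ψ a ≤ 1 := by
      have := hψ0 a ha; have := hψ1 b hb; linarith
    have hψd' : ψ a - ψ b ≤ 1 := by
      have := hψ0 b hb; have := hψ1 a ha; linarith
    -- h also holds for -φ
    have h' : ∀ a b : ℝ, 0 ≤ a → 0 ≤ b →
        (-φ) b - (-φ) a ≤ (b - a) * (ψ b - ψ a) := by
      intro u v hu hv
      have := h v u hv hu
      simp only [Pi.neg_apply]
      nlinarith [this]
    have bound : ∀ n : ℕ, 0 < n → |φ b - φ a| ≤ (b - a) / n := by
      intro n hn
      have hn' : (0:ℝ) < n := by exact_mod_cast hn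
      have hdn : 0 ≤ (b - a) / n := div_nonneg (by linarith) hn'.le
      have h1 := hartline_key ψ φ h a b ha hab n hn
      have h2 := hartline_key ψ (-φ) h' a b ha hab n hn
      simp only [Pi.neg_apply] at h2
      have b1 : φ b - φ a ≤ (b - a) / n :=
        le_trans h1 (by nlinarith)
      have b2 : -(φ b - φ a) ≤ (b - a) / n := by
        have : ((b - a) / n) * (ψ b - ψ a) ≤ (b - a) / n := by nlinarith
        linarith
      exact abs_le.mpr ⟨by linarith, b1⟩
    by_contra hne
    have hpos : 0 < |φ b - φ a| := by
      rw [abs_pos]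
      intro hz
      exact hne (by linarith [sub_eq_zero.mp hz])
    obtain ⟨n, hnlt⟩ := exists_nat_gt ((b - a) / |φ b - φ a|)
    have hn : 0 < n := by
      by_contra hn0
      push_neg at hn0
      interval_cases n
      simp at hnlt
      nlinarith [div_nonneg (by linarith : (0:ℝ) ≤ b - a) hpos.le]
    have hn' : (0:ℝ) < n := by exact_mod_cast hn
    have := bound n hn
    have : (b - a) / n < |φ b - φ a| := by
      rw [div_lt_iff₀ hn']
      have := (div_lt_iff₀ hpos).mp hnlt
      linarith [this]
    linarith [bound n hn]
  intro a b ha hb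
  rcases le_total a b with hab | hab
  · exact main a b ha hab
  · exact (main b a hb hab).symm
end

section
/- Fix a reserve price r > 0 and define, for v, b ≥ 0, U(v, b) = (v − min(b, r)/2)·min(b/r, 1). Then for all v, b ≥ 0, U(v, b) ≤ U(v, v). Consequently, in the proportional auction truthful bidding maximizes every user's expected utility (strict UIC). -/
/-- Strict UIC of the proportional auction: with reserve price r > 0, a user
with true value v bidding b obtains expected utility
U(v,b) = (v − min(b,r)/2)·min(b/r, 1), which is maximized by truthful
bidding. -/
theorem proportional_auction_UIC
    (r : ℝ) (hr : 0 < r) :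
    ∀ v b : ℝ, 0 ≤ v → 0 ≤ b →
      (v - min b r / 2) * min (b / r) 1 ≤ (v - min v r / 2) * min (v / r) 1 := by
  intro v b hv hb
  rcases le_total b r with hbr | hbr <;> rcases le_total v r with hvr | hvr
  · rw [min_eq_left hbr, min_eq_left hvr,
      min_eq_left ((div_le_one hr).2 hbr), min_eq_left ((div_le_one hr).2 hvr)]
    rw [show (v - b / 2) * (b / r) = (v - b / 2) * b / r by ring,
      show (v - v / 2) * (v / r) = (v - v / 2) * v / r by ring,
      div_le_div_iff₀ hr hr]
    nlinarith [sq_nonneg (v - b), hr.le]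
  · rw [min_eq_left hbr, min_eq_right hvr,
      min_eq_left ((div_le_one hr).2 hbr), min_eq_right ((one_le_div hr).2 hvr)]
    rw [mul_one, show (v - b / 2) * (b / r) = (v - b / 2) * b / r by ring,
      div_le_iff₀ hr]
    nlinarith [mul_nonneg (sub_nonneg.2 hbr) (sub_nonneg.2 hvr)]
  · rw [min_eq_right hbr, min_eq_left hvr,
      min_eq_right ((one_le_div hr).2 hbr), min_eq_left ((div_le_one hr).2 hvr)]
    rw [mul_one, show (v - v / 2) * (v / r) = (v - v / 2) * v / r by ring,
      le_div_iff₀ hr]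
    nlinarith [sq_nonneg (v - r)]
  · rw [min_eq_right hbr, min_eq_right hvr,
      min_eq_right ((one_le_div hr).2 hbr), min_eq_right ((one_le_div hr).2 hvr)]
end

section
/- Fix ε > 0 and a reserve price r ≥ 2ε. Define, for v, b ≥ 0, U(v, b) = (v − min(b, r)/2)·min(b/r, 1) and M(b) = (√(2rε)/2)·min(b/r, 1) if b ≥ √(2rε) and M(b) = 0 otherwise. Then for all v, b ≥ 0: U(v, b) + M(b) ≤ U(v, v) + M(v) + (5/4)·ε. Consequently, a coalition of the miner and c users can increase its joint expected utility by at most (5/4)·c·ε over honest behavior, i.e., the proportional auction is (5/4)cε-SCP against c-sized coalitions for every c ≥ 1. -/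
set_option maxHeartbeats 1600000 in
/-- (5/4)cε-SCP of the proportional auction: with reserve price r ≥ 2ε, for a
user with true value v bidding b, the joint expected utility of the miner and
that user, U(v,b) + M(b), exceeds the honest joint utility U(v,v) + M(v) by at
most (5/4)ε.  Summing over the at most c colluding users shows that the
proportional auction is (5/4)cε-SCP against c-sized coalitions for every
c ≥ 1. -/
theorem proportional_auction_SCP
    (ε r : ℝ) (hε : 0 < ε) (hr : 2 * ε ≤ r)
    (U : ℝ → ℝ → ℝ) (M : ℝ → ℝ)
    (hU : ∀ v b : ℝ, U v b = (v - min b r / 2) * min (b / r) 1)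
    (hM : ∀ b : ℝ, M b =
      if Real.sqrt (2 * r * ε) ≤ b then Real.sqrt (2 * r * ε) / 2 * min (b / r) 1
      else 0) :
    ∀ v b : ℝ, 0 ≤ v → 0 ≤ b →
      U v b + M b ≤ U v v + M v + 5 / 4 * ε := by
  intro v b hv hb
  have hr0 : (0:ℝ) < r := lt_of_lt_of_le (by linarith) hr
  have h2re : (0:ℝ) ≤ 2 * r * ε := by positivity
  set s := Real.sqrt (2 * r * ε) with hsdef
  have hs0 : 0 ≤ s := Real.sqrt_nonneg _
  have hs2 : s ^ 2 = 2 * r * ε := Real.sq_sqrt h2re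
  have hsr : s ≤ r := by nlinarith [sq_nonneg (s - r), sq_nonneg (s + r)]
  clear_value s
  rw [hU, hU, hM, hM]
  clear hU hM hsdef h2re
  clear U M
  rcases le_total b r with hbr | hbr
  · have hbr1 : b / r ≤ 1 := (div_le_one hr0).2 hbr
    rw [min_eq_left hbr, min_eq_left hbr1]
    rcases le_total v r with hvr | hvr
    · have hvr1 : v / r ≤ 1 := (div_le_one hr0).2 hvr
      rw [min_eq_left hvr, min_eq_left hvr1]
      split_ifs with h1 h2 h2
      · -- s ≤ b, s ≤ v
        have key : (v - b/2)*b + s/2*b ≤ (v - v/2)*v + s/2*v + 5/4*ε*r := by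
          nlinarith [sq_nonneg (b - v - s/2), hs2]
        calc (v - b / 2) * (b / r) + s / 2 * (b / r) = ((v - b/2)*b + s/2*b)/r := by ring
          _ ≤ ((v - v/2)*v + s/2*v + 5/4*ε*r)/r := by gcongr
          _ = (v - v / 2) * (v / r) + s / 2 * (v / r) + 5 / 4 * ε := by field_simp
      · -- s ≤ b, v < s
        have hvs : v ≤ s := le_of_not_ge h2
        have key : (v - b/2)*b + s/2*b ≤ (v - v/2)*v + 5/4*ε*r := by
          nlinarith [sq_nonneg (b - v - s/2), hs2, mul_nonneg hs0 (by linarith : (0:ℝ) ≤ s - v)]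
        calc (v - b / 2) * (b / r) + s / 2 * (b / r) = ((v - b/2)*b + s/2*b)/r := by ring
          _ ≤ ((v - v/2)*v + 5/4*ε*r)/r := by gcongr
          _ = (v - v / 2) * (v / r) + 0 + 5 / 4 * ε := by field_simp; ring
      · -- b < s, s ≤ v
        have key : (v - b/2)*b ≤ (v - v/2)*v + s/2*v + 5/4*ε*r := by
          nlinarith [sq_nonneg (v - b), mul_nonneg hs0 hv, mul_pos hr0 hε]
        calc (v - b / 2) * (b / r) + 0 = ((v - b/2)*b)/r := by ring
          _ ≤ ((v - v/2)*v + s/2*v + 5/4*ε*r)/r := by gcongr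
          _ = (v - v / 2) * (v / r) + s / 2 * (v / r) + 5 / 4 * ε := by field_simp
      · -- b < s, v < s
        have key : (v - b/2)*b ≤ (v - v/2)*v + 5/4*ε*r := by
          nlinarith [sq_nonneg (v - b), mul_pos hr0 hε]
        calc (v - b / 2) * (b / r) + 0 = ((v - b/2)*b)/r := by ring
          _ ≤ ((v - v/2)*v + 5/4*ε*r)/r := by gcongr
          _ = (v - v / 2) * (v / r) + 0 + 5 / 4 * ε := by field_simp; ring
    · -- b ≤ r ≤ v
      have hvr1 : (1:ℝ) ≤ v / r := (one_le_div hr0).2 hvr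
      rw [min_eq_right hvr, min_eq_right hvr1]
      rw [if_pos (le_trans hsr hvr)]
      split_ifs with h1
      · -- s ≤ b
        have key : (v - b/2)*b + s/2*b ≤ (v - r/2)*r + s/2*r + 5/4*ε*r := by
          nlinarith [mul_nonneg (by linarith : (0:ℝ) ≤ r - b)
            (by linarith : (0:ℝ) ≤ 2*v + s - b - r), mul_pos hr0 hε]
        calc (v - b / 2) * (b / r) + s / 2 * (b / r) = ((v - b/2)*b + s/2*b)/r := by ring
          _ ≤ ((v - r/2)*r + s/2*r + 5/4*ε*r)/r := by gcongr
          _ = (v - r / 2) * 1 + s / 2 * 1 + 5 / 4 * ε := by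
              rw [mul_one, mul_one, div_eq_iff hr0.ne']; ring
      · -- b < s
        have hbs : b ≤ s := le_of_not_ge h1
        have key : (v - b/2)*b ≤ (v - r/2)*r + s/2*r + 5/4*ε*r := by
          nlinarith [mul_nonneg (by linarith : (0:ℝ) ≤ s - b)
            (by linarith : (0:ℝ) ≤ 2*v - b - s),
            mul_nonneg (by linarith : (0:ℝ) ≤ v - r) (by linarith : (0:ℝ) ≤ r - s),
            sq_nonneg (r - s), mul_pos hr0 hε]
        calc (v - b / 2) * (b / r) + 0 = ((v - b/2)*b)/r := by ring
          _ ≤ ((v - r/2)*r + s/2*r + 5/4*ε*r)/r := by gcongr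
          _ = (v - r / 2) * 1 + s / 2 * 1 + 5 / 4 * ε := by
              rw [mul_one, mul_one, div_eq_iff hr0.ne']; ring
  · -- r ≤ b
    have hbr1 : (1:ℝ) ≤ b / r := (one_le_div hr0).2 hbr
    rw [min_eq_right hbr, min_eq_right hbr1]
    rw [if_pos (le_trans hsr hbr)]
    rcases le_total v r with hvr | hvr
    · have hvr1 : v / r ≤ 1 := (div_le_one hr0).2 hvr
      rw [min_eq_left hvr, min_eq_left hvr1]
      split_ifs with h1
      · -- s ≤ v
        have key : (v - r/2)*r + s/2*r ≤ (v - v/2)*v + s/2*v + 5/4*ε*r := by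
          nlinarith [sq_nonneg (r - v - s/2), sq_nonneg s, hs2]
        calc (v - r / 2) * 1 + s / 2 * 1 = ((v - r/2)*r + s/2*r)/r := by rw [eq_div_iff hr0.ne']; ring
          _ ≤ ((v - v/2)*v + s/2*v + 5/4*ε*r)/r := by gcongr
          _ = (v - v / 2) * (v / r) + s / 2 * (v / r) + 5 / 4 * ε := by field_simp
      · -- v < s
        have hvs : v ≤ s := le_of_not_ge h1
        have key : (v - r/2)*r + s/2*r ≤ (v - v/2)*v + 5/4*ε*r := by
          nlinarith [mul_nonneg (by linarith : (0:ℝ) ≤ s - v)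
            (by linarith : (0:ℝ) ≤ 2*r - s - v), sq_nonneg (2*r - 3*s), hs2]
        calc (v - r / 2) * 1 + s / 2 * 1 = ((v - r/2)*r + s/2*r)/r := by rw [eq_div_iff hr0.ne']; ring
          _ ≤ ((v - v/2)*v + 5/4*ε*r)/r := by gcongr
          _ = (v - v / 2) * (v / r) + 0 + 5 / 4 * ε := by field_simp; ring
    · have hvr1 : (1:ℝ) ≤ v / r := (one_le_div hr0).2 hvr
      rw [min_eq_right hvr, min_eq_right hvr1]
      rw [if_pos (le_trans hsr hvr)]
      linarith
end

section
/- Fix a reserve price r ≥ 0 and an integer block size k ≥ 1. For all reals v ≥ 0 and b ≥ 0, and all integers ℓ ≥ 0 and m ≥ 0: 1[b ≥ r]·min(k/(ℓ + 1 + m), 1)·(v − r) ≤ 1[v ≥ r]·min(k/(ℓ + 1), 1)·(v − r). That is, in the MPC-assisted posted price auction with random selection, a user with true value v who misreports its bid as b and injects m additional fake candidate bids never obtains expected utility exceeding its truthful expected utility; together with the fact that all payments are burnt (the miner revenue is identically 0), this yields UIC, MIC, and (ρ,1)-SCP in the ex post setting for every ρ ∈ (0,1]. -/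
/-- MPC-assisted posted price auction with random selection: a user with true
value v who misreports its bid as b and injects m additional fake candidate
bids (when ℓ other candidate bids are present) never obtains expected utility
exceeding its truthful expected utility.  Together with the zero miner revenue,
this yields UIC, MIC and (ρ,1)-SCP in the ex post setting. -/
theorem mpc_posted_price_random_selection
    (r : ℝ) (hr : 0 ≤ r) (k : ℕ) (hk : 1 ≤ k) :
    ∀ v b : ℝ, 0 ≤ v → 0 ≤ b → ∀ ℓ m : ℕ,
      (if r ≤ b then (1 : ℝ) else 0) * min ((k : ℝ) / ((ℓ : ℝ) + 1 + (m : ℝ))) 1 * (v - r)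
        ≤ (if r ≤ v then (1 : ℝ) else 0) * min ((k : ℝ) / ((ℓ : ℝ) + 1)) 1 * (v - r) := by
  intro v b hv hb ℓ m
  have hl1 : (0 : ℝ) < (ℓ : ℝ) + 1 := by positivity
  have hl2 : (0 : ℝ) < (ℓ : ℝ) + 1 + (m : ℝ) := by positivity
  have hmin2 : (0 : ℝ) ≤ min ((k : ℝ) / ((ℓ : ℝ) + 1 + (m : ℝ))) 1 := by positivity
  have hmin1 : (0 : ℝ) ≤ min ((k : ℝ) / ((ℓ : ℝ) + 1)) 1 := by positivity
  have hle : min ((k : ℝ) / ((ℓ : ℝ) + 1 + (m : ℝ))) 1 ≤ min ((k : ℝ) / ((ℓ : ℝ) + 1)) 1 := by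
    apply min_le_min _ le_rfl
    apply div_le_div_of_nonneg_left (by positivity) hl1
    linarith [Nat.cast_nonneg (α := ℝ) m]
  by_cases hvr : r ≤ v
  · simp only [hvr, if_true, one_mul]
    have hvr' : 0 ≤ v - r := by linarith
    by_cases hbr : r ≤ b
    · simp only [hbr, if_true, one_mul]
      exact mul_le_mul_of_nonneg_right hle hvr'
    · simp only [hbr, if_false, zero_mul]
      positivity
  · simp only [hvr, if_false, zero_mul]
    by_cases hbr : r ≤ b
    · simp only [hbr, if_true, one_mul]
      have : v - r ≤ 0 := by linarith
      exact mul_nonpos_of_nonneg_of_nonpos hmin2 this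
    · simp [hbr]
end

section
/- Fix a reserve price r ≥ 0, an integer block size k ≥ 1, and a real T ≥ k. For all reals v ≥ 0 and b ≥ 0, and all integers ℓ ≥ 0 and m ≥ 0: 1[b ≥ r]·(v − r)·k/max(T, ℓ + 1 + m) ≤ 1[v ≥ r]·(v − r)·k/max(T, ℓ + 1). That is, in the MPC-assisted diluted posted price auction, misreporting one's bid and/or injecting fake candidate bids never increases a user's expected utility over truthful bidding (strict UIC). -/
/-- Strict UIC of the MPC-assisted diluted posted price auction: misreporting
one's bid as b and/or injecting m fake candidate bids (when ℓ other candidate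
bids are present) never increases a user's expected utility over truthful
bidding. -/
theorem mpc_diluted_posted_price_UIC
    (r : ℝ) (hr : 0 ≤ r) (k : ℕ) (hk : 1 ≤ k) (T : ℝ) (hT : (k : ℝ) ≤ T) :
    ∀ v b : ℝ, 0 ≤ v → 0 ≤ b → ∀ ℓ m : ℕ,
      (if r ≤ b then (1 : ℝ) else 0) * (v - r) * (k : ℝ) / max T ((ℓ : ℝ) + 1 + (m : ℝ))
        ≤ (if r ≤ v then (1 : ℝ) else 0) * (v - r) * (k : ℝ) / max T ((ℓ : ℝ) + 1) := by
  intro v b hv hb ℓ m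
  have hk' : (1 : ℝ) ≤ (k : ℝ) := by exact_mod_cast hk
  have hT0 : (0 : ℝ) < T := lt_of_lt_of_le one_pos (le_trans hk' hT)
  have hd1 : (0 : ℝ) < max T ((ℓ : ℝ) + 1) := lt_max_of_lt_left hT0
  have hd2 : (0 : ℝ) < max T ((ℓ : ℝ) + 1 + (m : ℝ)) := lt_max_of_lt_left hT0
  have hkk : (0 : ℝ) ≤ (k : ℝ) := by positivity
  by_cases hvr : r ≤ v
  · simp only [hvr, if_true]
    by_cases hbr : r ≤ b
    · simp only [hbr, if_true]
      rw [div_le_div_iff₀ hd2 hd1]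
      have hmono : max T ((ℓ : ℝ) + 1) ≤ max T ((ℓ : ℝ) + 1 + (m : ℝ)) := by
        apply max_le_max le_rfl
        have : (0:ℝ) ≤ (m : ℝ) := by positivity
        linarith
      have hnum : (0 : ℝ) ≤ 1 * (v - r) * (k : ℝ) := by
        have : (0:ℝ) ≤ v - r := by linarith
        positivity
      nlinarith
    · simp only [hbr, if_false]
      have : (0:ℝ) ≤ v - r := by linarith
      have h1 : (0:ℝ) * (v - r) * (k:ℝ) / max T ((ℓ : ℝ) + 1 + (m : ℝ)) = 0 := by ring
      rw [h1]
      positivity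
  · simp only [hvr, if_false]
    have hvr' : v - r ≤ 0 := by linarith
    have h2 : (0:ℝ) * (v - r) * (k:ℝ) / max T ((ℓ : ℝ) + 1) = 0 := by ring
    rw [h2]
    by_cases hbr : r ≤ b
    · simp only [hbr, if_true]
      apply div_nonpos_of_nonpos_of_nonneg _ hd2.le
      nlinarith
    · simp only [hbr, if_false]
      simp
end

section
/- Let k ≥ 1 and c ≥ 1 be integers and let M > 0 and ε > 0 be reals with k·M ≥ ε, and set T = max(2c·√(kM/ε), k). Then for all reals r, v with 0 ≤ r ≤ v ≤ M and all integers ℓ, ℓ' with 0 ≤ ℓ' ≤ ℓ and ℓ' ≥ ℓ − c: (v − r)·( k/max(T, ℓ') − k/max(T, ℓ) ) ≤ ε/(2c). -/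
/-- Key inequality in the ε-SCP proof of the MPC-assisted diluted posted price
auction: with dilution parameter T = max(2c·√(kM/ε), k), if a coalition of at
most c users reduces the number of candidates from ℓ to ℓ' ≥ ℓ − c, then the
expected utility of any one colluding user with true value v ∈ [r, M]
increases by at most ε/(2c). -/
theorem mpc_diluted_posted_price_SCP_key
    (k c : ℕ) (hk : 1 ≤ k) (hc : 1 ≤ c)
    (M ε : ℝ) (hM : 0 < M) (hε : 0 < ε) (hkM : ε ≤ (k : ℝ) * M)
    (T : ℝ) (hT : T = max (2 * (c : ℝ) * Real.sqrt ((k : ℝ) * M / ε)) (k : ℝ))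
    (r v : ℝ) (hr : 0 ≤ r) (hrv : r ≤ v) (hvM : v ≤ M)
    (ℓ ℓ' : ℕ) (hle : ℓ' ≤ ℓ) (hcap : ℓ ≤ ℓ' + c) :
    (v - r) * ((k : ℝ) / max T (ℓ' : ℝ) - (k : ℝ) / max T (ℓ : ℝ)) ≤ ε / (2 * (c : ℝ)) := by
  have hc0 : (0:ℝ) < c := by exact_mod_cast hc
  have hk0 : (0:ℝ) < k := by exact_mod_cast hk
  set s := Real.sqrt ((k:ℝ) * M / ε) with hs
  have hs2 : s ^ 2 = (k:ℝ) * M / ε := Real.sq_sqrt (by positivity)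
  have hs0 : 0 < s := Real.sqrt_pos.mpr (by positivity)
  set A := max T (ℓ':ℝ) with hA
  set B := max T (ℓ:ℝ) with hB
  have hTA : 2 * (c:ℝ) * s ≤ A := le_trans (by rw [hT]; exact le_max_left _ _) (le_max_left _ _)
  have hA0 : 0 < A := lt_of_lt_of_le (by positivity) hTA
  have hAB : A ≤ B := max_le_max le_rfl (by exact_mod_cast hle)
  have hB0 : 0 < B := lt_of_lt_of_le hA0 hAB
  have hBA : B ≤ A + c := by
    apply max_le
    · exact le_trans (le_max_left _ _) (le_add_of_nonneg_right hc0.le)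
    · calc (ℓ:ℝ) ≤ (ℓ':ℝ) + c := by exact_mod_cast hcap
        _ ≤ A + c := by gcongr; exact le_max_right _ _
  clear_value A B s
  have key : (k:ℝ)/A - (k:ℝ)/B = (k:ℝ)*(B-A)/(A*B) := by
    field_simp
  have hvr : 0 ≤ v - r := by linarith
  have hvrM : v - r ≤ M := by linarith
  have hdiff : 0 ≤ (k:ℝ)*(B-A)/(A*B) := by
    apply div_nonneg
    · nlinarith
    · positivity
  have h1 : (v - r) * ((k:ℝ)/A - (k:ℝ)/B) ≤ M * ((k:ℝ)*(B-A)/(A*B)) := by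
    rw [key]; exact mul_le_mul hvrM le_rfl hdiff hM.le
  have h2 : M * ((k:ℝ)*(B-A)/(A*B)) ≤ M * ((k:ℝ)*c/(A*A)) := by
    apply mul_le_mul_of_nonneg_left _ hM.le
    rw [div_le_div_iff₀ (by positivity) (by positivity)]
    calc (k:ℝ)*(B-A)*(A*A) ≤ (k:ℝ)*c*(A*A) := by
          nlinarith [mul_le_mul_of_nonneg_left (mul_le_mul_of_nonneg_right
            (show B - A ≤ (c:ℝ) by linarith) (mul_pos hA0 hA0).le) hk0.le]
      _ ≤ (k:ℝ)*c*(A*B) := by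
          apply mul_le_mul_of_nonneg_left _ (by positivity)
          exact mul_le_mul_of_nonneg_left hAB hA0.le
  have hsq : (2*(c:ℝ)*s)*(2*(c:ℝ)*s) ≤ A*A :=
    mul_le_mul hTA hTA (by positivity) hA0.le
  have hAA : 4 * (c:ℝ)^2 * ((k:ℝ)*M/ε) ≤ A * A := by
    calc 4*(c:ℝ)^2*((k:ℝ)*M/ε) = (2*(c:ℝ)*s)*(2*(c:ℝ)*s) := by rw [← hs2]; ring
      _ ≤ A*A := hsq
  have h4 : M * ((k:ℝ)*c/(A*A)) ≤ ε / (2 * (c:ℝ)) := by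
    rw [mul_div_assoc', div_le_div_iff₀ (by positivity) (by positivity)]
    have h6 : 4*(c:ℝ)^2*((k:ℝ)*M) ≤ ε*(A*A) := by
      calc 4*(c:ℝ)^2*((k:ℝ)*M) = ε * (4*(c:ℝ)^2*((k:ℝ)*M/ε)) := by field_simp
        _ ≤ ε*(A*A) := mul_le_mul_of_nonneg_left hAA hε.le
    nlinarith [mul_pos (mul_pos hk0 hM) (mul_pos hc0 hc0)]
  linarith
end

section
/- Let ε > 0, let x : [0,∞) → [0,1], and let p, μ : [0,∞) → ℝ satisfy: (a) p(b) ≤ b·x(b) for all b ≥ 0 (truthful utility is nonnegative); (b) for all 0 ≤ b ≤ b': p(b') − p(b) ≤ b'·(x(b') − x(b)) + ε; (c) for all 0 ≤ b ≤ b': μ(b') − μ(b) ≤ 2ε + (b' − b)·(x(b') − x(b)). Then: if 0 ≤ v ≤ 2ε, μ(v) − μ(0) ≤ 4ε; and if v > 2ε, μ(v) − μ(0) ≤ (v·x(v) − p(v)) + 3ε·log₂(v/ε) + 4ε. -/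
/-- Bound on the drop of miner revenue when a user's bid is lowered to 0, for
plain-model mechanisms satisfying the consequences of ε-UIC (payment
sandwich), nonnegativity of truthful utility, and the ε-SCP miner-revenue
step bound; proved by telescoping along the geometric sequence
b_l = v − v/2^l. -/
theorem miner_rev_bound_by_user_utility
    (ε : ℝ) (hε : 0 < ε)
    (x p μ : ℝ → ℝ)
    (hx0 : ∀ b : ℝ, 0 ≤ b → 0 ≤ x b)
    (hx1 : ∀ b : ℝ, 0 ≤ b → x b ≤ 1)
    (ha : ∀ b : ℝ, 0 ≤ b → p b ≤ b * x b)
    (hb : ∀ b b' : ℝ, 0 ≤ b → b ≤ b' →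
      p b' - p b ≤ b' * (x b' - x b) + ε)
    (hc : ∀ b b' : ℝ, 0 ≤ b → b ≤ b' →
      μ b' - μ b ≤ 2 * ε + (b' - b) * (x b' - x b)) :
    ∀ v : ℝ,
      (0 ≤ v → v ≤ 2 * ε → μ v - μ 0 ≤ 4 * ε) ∧
      (2 * ε < v →
        μ v - μ 0 ≤ (v * x v - p v) + 3 * ε * Real.logb 2 (v / ε) + 4 * ε) := by
  intro v
  constructor
  · intro hv0 hv2
    have h := hc 0 v le_rfl hv0
    have h1 := hx1 v hv0
    have h0 := hx0 0 le_rfl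
    have hmul : v * (x v - x 0) ≤ v * 1 :=
      mul_le_mul_of_nonneg_left (by linarith) hv0
    nlinarith
  · intro hv
    have hv0 : 0 < v := by linarith
    set t := Real.logb 2 (v / ε) with ht
    have hvε : (2:ℝ) < v / ε := (lt_div_iff₀ hε).2 (by linarith)
    have htv : (2:ℝ) ^ t = v / ε :=
      Real.rpow_logb two_pos (by norm_num) (div_pos hv0 hε)
    have ht1 : 1 < t := by
      rw [ht, Real.lt_logb_iff_rpow_lt (by norm_num) (div_pos hv0 hε)]
      simpa using hvε
    set L : ℕ := ⌊t⌋₊ with hLdef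
    have hLt : (L : ℝ) ≤ t := Nat.floor_le (by linarith)
    have htL : t < L + 1 := Nat.lt_floor_add_one t
    clear_value t L
    set B : ℕ → ℝ := fun l => v - v / 2 ^ l with hB
    have hBle : ∀ l : ℕ, B l ≤ v := by
      intro l
      have : (0:ℝ) ≤ v / 2 ^ l := by positivity
      show v - v / 2 ^ l ≤ v
      linarith
    have hBnn : ∀ l : ℕ, 0 ≤ B l := by
      intro l
      have h1 : (1:ℝ) ≤ 2 ^ l := one_le_pow₀ (by norm_num)
      have h2 : v / 2 ^ l ≤ v := div_le_self hv0.le h1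
      show 0 ≤ v - v / 2 ^ l
      linarith
    have hBmono : ∀ l : ℕ, B l ≤ B (l + 1) := by
      intro l
      have h2l : (0:ℝ) < 2 ^ l := by positivity
      have h12 : (2:ℝ) ^ l ≤ 2 ^ (l + 1) := by
        rw [pow_succ]; nlinarith
      have : v / 2 ^ (l + 1) ≤ v / 2 ^ l :=
        div_le_div_of_nonneg_left hv0.le h2l h12
      show v - v / 2 ^ l ≤ v - v / 2 ^ (l + 1)
      linarith
    have hgap : ∀ m : ℕ, B (m + 1) - B m = v - B (m + 1) := by
      intro m
      show (v - v / 2 ^ (m + 1)) - (v - v / 2 ^ m) = v - (v - v / 2 ^ (m + 1))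
      have h2m : (0:ℝ) < 2 ^ m := by positivity
      rw [pow_succ]
      field_simp
      ring
    have hvBL : v - B L = v / 2 ^ L := by
      show v - (v - v / 2 ^ L) = v / 2 ^ L
      ring
    have hB0 : B 0 = 0 := by
      show v - v / 2 ^ 0 = 0
      simp
    clear_value B
    -- telescoping key lemma
    have key : ∀ n : ℕ, μ (B n) - μ (B 0) ≤
        3 * ε * n + ((v * x (B n) - p (B n)) - (v * x (B 0) - p (B 0))) := by
      intro n
      induction n with
      | zero => simp
      | succ m ih =>
        have h1 := hc (B m) (B (m + 1)) (hBnn m) (hBmono m)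
        have h2 := hb (B m) (B (m + 1)) (hBnn m) (hBmono m)
        rw [hgap m] at h1
        have e1 : (v - B (m + 1)) * (x (B (m + 1)) - x (B m)) =
            v * x (B (m + 1)) - v * x (B m)
              - (B (m + 1) * x (B (m + 1)) - B (m + 1) * x (B m)) := by ring
        have e2 : B (m + 1) * (x (B (m + 1)) - x (B m)) =
            B (m + 1) * x (B (m + 1)) - B (m + 1) * x (B m) := by ring
        rw [e1] at h1
        rw [e2] at h2
        push_cast
        linarith
    -- last step
    have hlast := hc (B L) v (hBnn L) (hBle L)
    have hxv := hx1 v hv0.le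
    have hxBL := hx0 (B L) (hBnn L)
    have hprod : (v - B L) * (x v - x (B L)) ≤ v / 2 ^ L := by
      rw [hvBL]
      have h1 : x v - x (B L) ≤ 1 := by linarith
      calc v / 2 ^ L * (x v - x (B L)) ≤ v / 2 ^ L * 1 :=
            mul_le_mul_of_nonneg_left h1 (by positivity)
        _ = v / 2 ^ L := mul_one _
    have hlast' : μ v - μ (B L) ≤ 2 * ε + v / 2 ^ L := by linarith
    -- bound on f (B L)
    have hfL : v * x (B L) - p (B L) ≤ (v * x v - p v) + ε := by
      have h2 := hb (B L) v (hBnn L) (hBle L)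
      have e : v * (x v - x (B L)) = v * x v - v * x (B L) := by ring
      rw [e] at h2
      linarith
    -- f 0 ≥ 0
    have hf0 : 0 ≤ v * x 0 - p 0 := by
      have h1 := ha 0 le_rfl
      have h2 := hx0 0 le_rfl
      nlinarith
    -- rpow arithmetic
    set s : ℝ := t - (L:ℝ) with hs
    clear_value s
    have hs0 : 0 ≤ s := by rw [hs]; linarith
    have hs1 : s ≤ 1 := by rw [hs]; linarith
    have h2s : (2:ℝ) ^ s ≤ 1 + s := by
      have hconv := convexOn_exp.2 (Set.mem_univ (0:ℝ)) (Set.mem_univ (Real.log 2))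
        (by linarith : (0:ℝ) ≤ 1 - s) hs0 (by ring)
      simp only [smul_eq_mul, mul_zero, zero_add, Real.exp_zero, mul_one] at hconv
      rw [Real.exp_log two_pos] at hconv
      rw [Real.rpow_def_of_pos two_pos]
      calc Real.exp (Real.log 2 * s) = Real.exp (s * Real.log 2) := by rw [mul_comm]
        _ ≤ (1 - s) + s * 2 := hconv
        _ = 1 + s := by ring
    have hv2L : v / 2 ^ L = ε * 2 ^ s := by
      have h1 : ((2:ℝ) ^ L : ℝ) = (2:ℝ) ^ (L : ℝ) := (Real.rpow_natCast 2 L).symm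
      rw [eq_div_iff hε.ne'] at htv
      rw [← htv, h1, hs, Real.rpow_sub two_pos]
      ring
    have h2spos : (0:ℝ) ≤ 2 ^ s := (Real.rpow_pos_of_pos two_pos s).le
    have h2sε : v / 2 ^ L ≤ ε + ε * s := by
      rw [hv2L]
      nlinarith
    have hkey := key L
    have hts : 3 * ε * (L:ℝ) + 3 * (ε * s) = 3 * ε * t := by
      rw [hs]; ring
    have hεs : 0 ≤ ε * s := mul_nonneg hε.le hs0
    rw [hB0] at hkey
    linarith
end

section
/- (ε-UIC of the staircase mechanism.) Fix the staircase mechanism with parameters k, M, ε, and any fixed tie-breaking rule. For every finite multiset b₋ᵢ of other users' bids, every true value v ∈ [0, M] of user i, and every strategy of user i consisting of submitting at most one own bid b' ≥ 0 (possibly abstaining) together with an arbitrary finite multiset of fake bids: let the honest miner include the top min(k, ·) bids of the resulting pool, let t' be the threshold index of that block, and let user i's strategic utility be (v − F_{t'})·1[b' is confirmed] minus F_{t'} for each of user i's confirmed fake bids. Then this strategic utility is at most user i's truthful utility plus ε, where the truthful utility equals (v − F_t)·1[v is confirmed] for the block formed from the top min(k, ·) bids of b₋ᵢ together with the single bid v,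 with threshold index t. -/
/-- Payment levels of the staircase mechanism: F_i = F_0 + i·ε with
F_0 = M − min(⌊M/ε⌋, k)·ε. -/
noncomputable def staircaseF (k : ℕ) (M ε : ℝ) (i : ℕ) : ℝ :=
  (M - (min (Nat.floor (M / ε)) k : ℕ) * ε) + (i : ℝ) * ε

/-- Threshold index t(B) of a block B: the largest i such that the i-th
largest bid of B is at least F_i, equivalently such that B contains at least
i bids that are ≥ F_i (and 0 if there is no such i ≥ 1). -/
noncomputable def staircaseThresh (k : ℕ) (M ε : ℝ) (B : Multiset ℝ) : ℕ :=
  (Finset.range (Multiset.card B + 1)).sup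
    (fun i => if i ≤ Multiset.card (B.filter (fun x => staircaseF k M ε i ≤ x)) then i else 0)

lemma staircaseF_nonneg (k : ℕ) {M ε : ℝ} (hM : 0 ≤ M) (hε : 0 < ε) (i : ℕ) :
    0 ≤ staircaseF k M ε i := by
  unfold staircaseF
  have h1 : ((min (Nat.floor (M / ε)) k : ℕ) : ℝ) ≤ (Nat.floor (M / ε) : ℕ) := by
    exact_mod_cast Nat.cast_le.2 (min_le_left _ _)
  have h2 : ((Nat.floor (M / ε) : ℕ) : ℝ) * ε ≤ (M / ε) * ε := by
    have := Nat.floor_le (by positivity : (0:ℝ) ≤ M / ε)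
    nlinarith
  have h3 : (M / ε) * ε = M := by field_simp
  have h4 : 0 ≤ (i : ℝ) * ε := by positivity
  nlinarith
lemma staircaseF_mono (k : ℕ) (M : ℝ) {ε : ℝ} (hε : 0 < ε) {i j : ℕ} (h : i ≤ j) :
    staircaseF k M ε i ≤ staircaseF k M ε j := by
  unfold staircaseF
  have : (i : ℝ) ≤ j := by exact_mod_cast h
  nlinarith
lemma staircaseF_succ (k : ℕ) (M ε : ℝ) (i : ℕ) :
    staircaseF k M ε (i + 1) = staircaseF k M ε i + ε := by
  unfold staircaseF; push_cast; ring
lemma staircaseF_k (k : ℕ) {M ε : ℝ} (hε : 0 < ε) : M ≤ staircaseF k M ε k := by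
  unfold staircaseF
  have h1 : ((min (Nat.floor (M / ε)) k : ℕ) : ℝ) ≤ (k : ℕ) := by
    exact_mod_cast Nat.cast_le.2 (min_le_right _ _)
  nlinarith
lemma thresh_le_card (k : ℕ) (M ε : ℝ) (B : Multiset ℝ) :
    staircaseThresh k M ε B ≤ Multiset.card B := by
  unfold staircaseThresh
  apply Finset.sup_le
  intro i _
  split
  · exact le_trans (by assumption) (Multiset.card_le_card (Multiset.filter_le _ _))
  · exact Nat.zero_le _
lemma thresh_filter (k : ℕ) (M ε : ℝ) (B : Multiset ℝ) :
    staircaseThresh k M ε B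
      ≤ Multiset.card (B.filter (fun x => staircaseF k M ε (staircaseThresh k M ε B) ≤ x)) := by
  obtain ⟨i, _, hi⟩ := Finset.exists_mem_eq_sup (Finset.range (Multiset.card B + 1))
    ⟨0, Finset.mem_range.2 (Nat.succ_pos _)⟩
    (fun i => if i ≤ Multiset.card (B.filter (fun x => staircaseF k M ε i ≤ x)) then i else 0)
  unfold staircaseThresh
  rw [hi]
  split
  · assumption
  · exact Nat.zero_le _
lemma le_thresh (k : ℕ) (M ε : ℝ) (B : Multiset ℝ) (j : ℕ) (hj : j ≤ Multiset.card B)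
    (hf : j ≤ Multiset.card (B.filter (fun x => staircaseF k M ε j ≤ x))) :
    j ≤ staircaseThresh k M ε B := by
  unfold staircaseThresh
  have hmem : j ∈ Finset.range (Multiset.card B + 1) := Finset.mem_range.2 (by omega)
  exact le_of_eq_of_le (if_pos hf).symm (Finset.le_sup (f := fun i =>
    if i ≤ Multiset.card (B.filter (fun x => staircaseF k M ε i ≤ x)) then i else 0) hmem)
lemma confirmed_ge (k : ℕ) (M ε : ℝ) (B C : Multiset ℝ) (hCB : C ≤ B)
    (hcard : Multiset.card C = staircaseThresh k M ε B)
    (htop : ∀ x ∈ C, ∀ y ∈ B - C, y ≤ x) :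
    ∀ x ∈ C, staircaseF k M ε (staircaseThresh k M ε B) ≤ x := by
  set t := staircaseThresh k M ε B with ht
  intro x hx
  by_contra hlt
  push_neg at hlt
  set p : ℝ → Prop := fun y => staircaseF k M ε t ≤ y with hp
  have hxp : x ∉ C.filter p := by
    simp [hp, Multiset.mem_filter]
    intro _; linarith
  have hCf : Multiset.card (C.filter p) < Multiset.card C := by
    apply Multiset.card_lt_card
    refine lt_of_le_of_ne (Multiset.filter_le _ _) ?_
    intro h; exact hxp (by rw [h]; exact hx)
  have hsplit : Multiset.card (B.filter p)
      = Multiset.card ((B - C).filter p) + Multiset.card (C.filter p) := by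
    have hB : (B - C) + C = B := tsub_add_cancel_of_le hCB
    have h2 : Multiset.card (((B - C) + C).filter p)
        = Multiset.card ((B - C).filter p) + Multiset.card (C.filter p) := by
      rw [Multiset.filter_add, Multiset.card_add]
    rw [hB] at h2
    exact h2
  have hBf : t ≤ Multiset.card (B.filter p) := thresh_filter k M ε B
  have hpos : 0 < Multiset.card ((B - C).filter p) := by omega
  obtain ⟨y, hy⟩ := Multiset.card_pos_iff_exists_mem.1 hpos
  have hy1 := Multiset.of_mem_filter hy
  have hy2 := Multiset.mem_of_mem_filter hy
  have := htop x hx y hy2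
  simp only [hp] at hy1
  linarith
lemma top_filter_count (D P : Multiset ℝ) (hDP : D ≤ P)
    (htop : ∀ x ∈ D, ∀ y ∈ P - D, y ≤ x) (c : ℝ) :
    min (Multiset.card (P.filter (fun x => c ≤ x))) (Multiset.card D)
      ≤ Multiset.card (D.filter (fun x => c ≤ x)) := by
  set p : ℝ → Prop := fun y => c ≤ y with hp
  by_cases h0 : (P - D).filter p = 0
  · have hB : (P - D) + D = P := tsub_add_cancel_of_le hDP
    have h2 : Multiset.card (((P - D) + D).filter p)
        = Multiset.card ((P - D).filter p) + Multiset.card (D.filter p) := by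
      rw [Multiset.filter_add, Multiset.card_add]
    rw [hB, h0] at h2
    simp only [Multiset.card_zero, Nat.zero_add] at h2
    rw [h2]
    exact min_le_left _ _
  · obtain ⟨y, hy⟩ := Multiset.card_pos_iff_exists_mem.1 (Multiset.card_pos.2 h0)
    have hy1 := Multiset.of_mem_filter hy
    have hy2 := Multiset.mem_of_mem_filter hy
    have hall : D.filter p = D := Multiset.filter_eq_self.2 (fun x hx => by
      have := htop x hx y hy2
      simp only [hp] at hy1 ⊢
      linarith)
    rw [hall]; exact min_le_right _ _
lemma card_filter_le_of_subset {D P : Multiset ℝ} (hDP : D ≤ P) {c : ℝ}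
    (h : ∀ x ∈ D, c ≤ x) :
    Multiset.card D ≤ Multiset.card (P.filter (fun x => c ≤ x)) := by
  calc Multiset.card D = Multiset.card (D.filter (fun x => c ≤ x)) := by
        rw [Multiset.filter_eq_self.2 h]
    _ ≤ _ := Multiset.card_le_card (Multiset.filter_le_filter _ hDP)
lemma card_filter_mono {s : Multiset ℝ} {c c' : ℝ} (h : c ≤ c') :
    Multiset.card (s.filter (fun x => c' ≤ x)) ≤ Multiset.card (s.filter (fun x => c ≤ x)) :=
  Multiset.card_le_card (Multiset.monotone_filter_right s (fun x hx => le_trans h hx))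

/-- ε-UIC of the staircase mechanism (for an arbitrary tie-breaking rule,
modelled by quantifying over every admissible choice of included block and
confirmed sub-multiset).  User i has true value v ∈ [0, M]; it may submit at
most one own bid (the multiset `own`, of size ≤ 1) together with a finite
multiset `fakes` of fake bids.  The honest miner includes the top
min(k, ·) bids of the pool; the t largest bids of the block are confirmed and
each pays F_t.  The strategic utility is (v − F_{t'})·1[own bid confirmed]
minus F_{t'} for each confirmed fake bid, and it exceeds the truthful utility
(v − F_t)·1[v confirmed] by at most ε. -/
theorem staircase_eps_UIC
    (k : ℕ) (hk : 1 ≤ k) (M ε : ℝ) (hM : 0 < M) (hε : 0 < ε)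
    (bOthers : Multiset ℝ) (hbO : ∀ x ∈ bOthers, (0:ℝ) ≤ x)
    (v : ℝ) (hv0 : 0 ≤ v) (hvM : v ≤ M)
    (own fakes : Multiset ℝ)
    (hownCard : Multiset.card own ≤ 1)
    (hown0 : ∀ x ∈ own, (0:ℝ) ≤ x) (hfk0 : ∀ x ∈ fakes, (0:ℝ) ≤ x)
    -- the strategic block: top min(k, ·) bids of the strategic pool,
    -- decomposed according to the origin of each included bid
    (Both Bfake Bown : Multiset ℝ)
    (hBoth : Both ≤ bOthers) (hBfake : Bfake ≤ fakes) (hBown : Bown ≤ own)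
    (hBcard : Multiset.card (Both + Bfake + Bown)
      = min k (Multiset.card (bOthers + fakes + own)))
    (hBtop : ∀ x ∈ Both + Bfake + Bown,
      ∀ y ∈ (bOthers + fakes + own) - (Both + Bfake + Bown), y ≤ x)
    -- the confirmed bids of the strategic block: its t' largest bids
    (Coth Cfake Cown : Multiset ℝ)
    (hCoth : Coth ≤ Both) (hCfake : Cfake ≤ Bfake) (hCown : Cown ≤ Bown)
    (hCcard : Multiset.card (Coth + Cfake + Cown)
      = staircaseThresh k M ε (Both + Bfake + Bown))
    (hCtop : ∀ x ∈ Coth + Cfake + Cown,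
      ∀ y ∈ (Both + Bfake + Bown) - (Coth + Cfake + Cown), y ≤ x)
    -- the honest block: top min(k, ·) bids of bOthers together with the bid v
    (Hoth Hv : Multiset ℝ)
    (hHoth : Hoth ≤ bOthers) (hHv : Hv ≤ {v})
    (hHcard : Multiset.card (Hoth + Hv) = min k (Multiset.card (v ::ₘ bOthers)))
    (hHtop : ∀ x ∈ Hoth + Hv, ∀ y ∈ (v ::ₘ bOthers) - (Hoth + Hv), y ≤ x)
    -- the confirmed bids of the honest block: its t largest bids
    (Koth Kv : Multiset ℝ)
    (hKoth : Koth ≤ Hoth) (hKv : Kv ≤ Hv)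
    (hKcard : Multiset.card (Koth + Kv) = staircaseThresh k M ε (Hoth + Hv))
    (hKtop : ∀ x ∈ Koth + Kv, ∀ y ∈ (Hoth + Hv) - (Koth + Kv), y ≤ x) :
    (v - staircaseF k M ε (staircaseThresh k M ε (Both + Bfake + Bown)))
        * (Multiset.card Cown : ℝ)
      - (Multiset.card Cfake : ℝ)
        * staircaseF k M ε (staircaseThresh k M ε (Both + Bfake + Bown))
    ≤ (v - staircaseF k M ε (staircaseThresh k M ε (Hoth + Hv)))
        * (Multiset.card Kv : ℝ) + ε := by
  classical
  set Bb := Both + Bfake + Bown with hBb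
  set Cc := Coth + Cfake + Cown with hCc
  set Hh := Hoth + Hv with hHh
  set Kk := Koth + Kv with hKk
  set pool := bOthers + fakes + own with hpool
  set t' := staircaseThresh k M ε Bb with ht'
  set t := staircaseThresh k M ε Hh with ht
  have hF0 : ∀ i, 0 ≤ staircaseF k M ε i := staircaseF_nonneg k hM.le hε
  have hCB : Cc ≤ Bb := add_le_add (add_le_add hCoth hCfake) hCown
  have hKH : Kk ≤ Hh := add_le_add hKoth hKv
  have hBpool : Bb ≤ pool := add_le_add (add_le_add hBoth hBfake) hBown
  have hbp : bOthers ≤ pool := by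
    rw [hpool]; exact (Multiset.le_add_right _ _).trans (Multiset.le_add_right _ _)
  have hCge : ∀ x ∈ Cc, staircaseF k M ε t' ≤ x := confirmed_ge k M ε Bb Cc hCB hCcard hCtop
  have hKge : ∀ x ∈ Kk, staircaseF k M ε t ≤ x := confirmed_ge k M ε Hh Kk hKH hKcard hKtop
  have ht'B : t' ≤ Multiset.card Bb := ht' ▸ thresh_le_card k M ε Bb
  have htH : t ≤ Multiset.card Hh := ht ▸ thresh_le_card k M ε Hh
  have hBk : Multiset.card Bb ≤ k := by rw [hBcard]; exact min_le_left _ _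
  have hHk : Multiset.card Hh ≤ k := by rw [hHcard]; exact min_le_left _ _
  have hCownC : Multiset.card Cown ≤ 1 :=
    le_trans (Multiset.card_le_card (hCown.trans hBown)) hownCard
  have hKvC : Multiset.card Kv ≤ 1 := by
    have := Multiset.card_le_card (hKv.trans hHv); simpa using this
  have hCfnn : (0:ℝ) ≤ (Multiset.card Cfake : ℝ) := Nat.cast_nonneg _
  -- counting workhorse: many big bids in the pool force big bids into the strategic block
  have key : ∀ (c : ℝ) (m : ℕ), m ≤ k → m ≤ Multiset.card pool →
      m ≤ Multiset.card (pool.filter (fun x => c ≤ x)) →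
      m ≤ Multiset.card (Bb.filter (fun x => c ≤ x)) := by
    intro c m hmk hmp hmf
    have hcardB : m ≤ Multiset.card Bb := by rw [hBcard]; exact le_min hmk hmp
    have := top_filter_count Bb pool hBpool hBtop c
    omega
  -- main contradiction engine for case B2
  have final : ∀ m : ℕ, t' + 1 ≤ m → m ≤ k →
      m ≤ Multiset.card (bOthers.filter (fun x => staircaseF k M ε (t'+1) ≤ x)) → False := by
    intro m hm1 hmk hmf
    have hpf : m ≤ Multiset.card (pool.filter (fun x => staircaseF k M ε (t'+1) ≤ x)) :=
      le_trans hmf (Multiset.card_le_card (Multiset.filter_le_filter _ hbp))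
    have hmp : m ≤ Multiset.card pool :=
      le_trans hpf (Multiset.card_le_card (Multiset.filter_le _ _))
    have hBf := key _ m hmk hmp hpf
    have hcardB : m ≤ Multiset.card Bb := by rw [hBcard]; exact le_min hmk hmp
    have h := le_thresh k M ε Bb (t'+1) (by omega) (le_trans hm1 hBf)
    rw [← ht'] at h
    omega
  rcases Nat.le_one_iff_eq_zero_or_eq_one.1 hCownC with hC0 | hC1
  · -- Case A: own bid not confirmed
    rw [hC0]
    have hKvnn : 0 ≤ (v - staircaseF k M ε t) * (Multiset.card Kv : ℝ) := by
      rcases Nat.le_one_iff_eq_zero_or_eq_one.1 hKvC with h0 | h1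
      · rw [h0]; simp
      · have hKveq : Kv = {v} := Multiset.eq_of_le_of_card_le (hKv.trans hHv) (by simp [h1])
        have hvK : v ∈ Kk := by
          rw [hKk]; exact Multiset.mem_add.2 (Or.inr (by rw [hKveq]; simp))
        have := hKge v hvK
        rw [h1]; push_cast; nlinarith
    have := mul_nonneg hCfnn (hF0 t')
    push_cast
    nlinarith
  · -- Case B: own bid confirmed
    rcases Nat.le_one_iff_eq_zero_or_eq_one.1 hKvC with hK0 | hK1
    · -- Case B2: v not confirmed honestly
      have hKv0 : Kv = 0 := Multiset.card_eq_zero.1 hK0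
      by_cases hvF : v ≤ staircaseF k M ε t' + ε
      · rw [hC1, hK0]
        have := mul_nonneg hCfnn (hF0 t')
        push_cast
        nlinarith
      · exfalso
        push_neg at hvF
        have hvF1 : staircaseF k M ε (t'+1) < v := by rw [staircaseF_succ]; linarith
        have ht'k : t' + 1 ≤ k := by
          by_contra h
          have h1 : k ≤ t' := by omega
          have h2 := staircaseF_mono k M hε h1
          have h3 := staircaseF_k k (M := M) hε
          linarith
        have hHvC : Multiset.card Hv ≤ 1 := by
          have := Multiset.card_le_card hHv; simpa using this
        rcases Nat.le_one_iff_eq_zero_or_eq_one.1 hHvC with hH0 | hH1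
        · -- v was not even included in the honest block
          have hHv0 : Hv = 0 := Multiset.card_eq_zero.1 hH0
          have hHb : Hh ≤ bOthers := by rw [hHh, hHv0]; simpa using hHoth
          have hHcard' : Multiset.card Hh = k := by
            have h1 : Multiset.card Hh ≤ Multiset.card bOthers := Multiset.card_le_card hHb
            have h2 := hHcard
            rw [Multiset.card_cons] at h2
            omega
          have hvmem : v ∈ (v ::ₘ bOthers) - Hh := by
            rw [← Multiset.count_pos, Multiset.count_sub, Multiset.count_cons_self]
            have := Multiset.count_le_of_le v hHb
            omega
          have hge : ∀ x ∈ Hh, staircaseF k M ε (t'+1) ≤ x := fun x hx =>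
            le_trans hvF1.le (hHtop x hx v hvmem)
          exact final k ht'k le_rfl (by
            have := card_filter_le_of_subset hHb hge; omega)
        · -- v was included in the honest block but not confirmed
          have hHveq : Hv = {v} := Multiset.eq_of_le_of_card_le hHv (by simp [hH1])
          have hKvH : Kk + {v} ≤ Hh := by
            rw [hKk, hKv0, hHh, hHveq]
            simpa using add_le_add hKoth (le_refl ({v} : Multiset ℝ))
          have hvmem : v ∈ Hh - Kk := by
            rw [← Multiset.count_pos, Multiset.count_sub]
            have h1 := Multiset.count_le_of_le v hKvH
            rw [Multiset.count_add, Multiset.count_singleton_self] at h1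
            omega
          have hKgev : ∀ x ∈ Kk, v ≤ x := fun x hx => hKtop x hx v hvmem
          have hallv : ∀ x ∈ Kk + {v}, staircaseF k M ε (t'+1) ≤ x := by
            intro x hx
            rcases Multiset.mem_add.1 hx with h | h
            · exact le_trans hvF1.le (hKgev x h)
            · rw [Multiset.mem_singleton.1 h]; exact hvF1.le
          have hjH : Multiset.card (Kk + {v}) ≤ Multiset.card Hh := Multiset.card_le_card hKvH
          have hKkt : Multiset.card Kk = t := hKcard
          have hKcard1 : Multiset.card (Kk + {v}) = t + 1 := by
            rw [Multiset.card_add, hKkt]; simp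
          have hjcard : min (t'+1) (t+1)
              ≤ Multiset.card (Hh.filter
                  (fun x => staircaseF k M ε (min (t'+1) (t+1)) ≤ x)) := by
            have h1 := card_filter_le_of_subset hKvH hallv
            have h2 := card_filter_mono (s := Hh)
              (staircaseF_mono k M hε (min_le_left (t'+1) (t+1)))
            omega
          have hjt := le_thresh k M ε Hh (min (t'+1) (t+1)) (by omega) hjcard
          rw [← ht] at hjt
          have ht't : t' + 1 ≤ t := by omega
          have hKob : Koth ≤ bOthers := hKoth.trans hHoth
          have hKoge : ∀ x ∈ Koth, staircaseF k M ε (t'+1) ≤ x := fun x hx =>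
            le_trans hvF1.le (hKgev x (by rw [hKk]; exact Multiset.mem_add.2 (Or.inl hx)))
          have hKot : Multiset.card Koth = t := by
            have h1 : Multiset.card Koth + Multiset.card Kv = t := by
              rw [← Multiset.card_add, ← hKk]; exact hKcard
            omega
          exact final t ht't (le_trans htH hHk) (by
            have := card_filter_le_of_subset hKob hKoge; omega)
    · -- Case B1: v confirmed honestly
      have hKveq : Kv = {v} := Multiset.eq_of_le_of_card_le (hKv.trans hHv) (by simp [hK1])
      have hKot : Multiset.card Koth = t - 1 ∧ 1 ≤ t := by
        have h1 : Multiset.card Koth + Multiset.card Kv = t := by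
          rw [← Multiset.card_add, ← hKk]; exact hKcard
        omega
      have hKothge : ∀ x ∈ Koth, staircaseF k M ε t ≤ x := fun x hx =>
        hKge x (by rw [hKk]; exact Multiset.mem_add.2 (Or.inl hx))
      have hKob : Koth ≤ pool := (hKoth.trans hHoth).trans hbp
      have h1 : t - 1 ≤ Multiset.card (pool.filter (fun x => staircaseF k M ε t ≤ x)) := by
        have := card_filter_le_of_subset hKob hKothge; omega
      have h2 : t - 1 ≤ Multiset.card (pool.filter (fun x => staircaseF k M ε (t-1) ≤ x)) :=
        le_trans h1 (card_filter_mono (staircaseF_mono k M hε (Nat.sub_le t 1)))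
      have hpk : t - 1 ≤ Multiset.card pool :=
        le_trans h2 (Multiset.card_le_card (Multiset.filter_le _ _))
      have htk : t ≤ k := le_trans htH hHk
      have h3 := key _ (t-1) (by omega) hpk h2
      have h4 := le_thresh k M ε Bb (t-1) (by rw [hBcard]; omega) h3
      rw [← ht'] at h4
      have hFt : staircaseF k M ε t ≤ staircaseF k M ε t' + ε := by
        have h5 := staircaseF_mono k M hε (show t ≤ t' + 1 by omega)
        rw [staircaseF_succ] at h5
        linarith
      rw [hC1, hK1]
      have := mul_nonneg hCfnn (hF0 t')
      push_cast
      nlinarith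
end

section
/- Fix ε > 0 and a reserve price r ≥ 2ε, and let M(b) = (√(2rε)/2)·min(b/r, 1) if b ≥ √(2rε) and M(b) = 0 otherwise (the expected miner revenue generated by a single bid b in the proportional auction). Then M(b) = √(2rε)/2 whenever b ≥ r, and consequently, if n bids are drawn independently from a Borel probability distribution D on [0,∞) with Pr_{X∼D}[X ≥ r] ≥ 1/2 and all users bid truthfully, the expected total miner revenue ∑ over the n bids of E[M(X)] is at least (n/4)·√(2rε). -/
open MeasureTheory

/-- Miner revenue of the proportional auction: with reserve price r ≥ 2ε, the
expected miner revenue M(b) generated by a single bid b equals √(2rε)/2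
whenever b ≥ r; consequently, if n bids are drawn i.i.d. from a distribution D
on [0,∞) with Pr[X ≥ r] ≥ 1/2 and all users bid truthfully, the expected total
miner revenue n·E[M(X)] is at least (n/4)·√(2rε). -/
theorem proportional_auction_revenue
    (ε r : ℝ) (hε : 0 < ε) (hr : 2 * ε ≤ r)
    (M : ℝ → ℝ)
    (hM : ∀ b : ℝ, M b =
      if Real.sqrt (2 * r * ε) ≤ b then Real.sqrt (2 * r * ε) / 2 * min (b / r) 1
      else 0)
    (D : Measure ℝ) [IsProbabilityMeasure D] (hD : D (Set.Iio 0) = 0)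
    (hmed : (1 : ENNReal) / 2 ≤ D (Set.Ici r))
    (n : ℕ) :
    (∀ b : ℝ, r ≤ b → M b = Real.sqrt (2 * r * ε) / 2) ∧
    ((n : ℝ) / 4) * Real.sqrt (2 * r * ε) ≤ (n : ℝ) * ∫ x, M x ∂D := by
  set s := Real.sqrt (2 * r * ε) with hs
  have hr0 : 0 < r := lt_of_lt_of_le (by linarith) hr
  have hs0 : 0 ≤ s := Real.sqrt_nonneg _
  have hsr : s ≤ r := by
    have h1 : Real.sqrt (2 * r * ε) ≤ Real.sqrt (r * r) :=
      Real.sqrt_le_sqrt (by nlinarith)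
    rwa [Real.sqrt_mul_self hr0.le] at h1
  have part1 : ∀ b : ℝ, r ≤ b → M b = s / 2 := by
    intro b hb
    rw [hM b, if_pos (le_trans hsr hb)]
    have : min (b / r) 1 = 1 := min_eq_right ((one_le_div hr0).mpr hb)
    rw [this, mul_one]
  refine ⟨part1, ?_⟩
  -- nonnegativity of M
  have hMnn : ∀ b : ℝ, 0 ≤ M b := by
    intro b
    rw [hM b]
    split_ifs with h
    · have hb0 : 0 ≤ b := le_trans hs0 h
      have : 0 ≤ min (b / r) 1 := le_min (div_nonneg hb0 hr0.le) zero_le_one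
      positivity
    · exact le_refl 0
  -- M is integrable: bounded and measurable
  have hMeq : M = fun b => if s ≤ b then s / 2 * min (b / r) 1 else 0 := funext hM
  have hmeas : Measurable M := by
    rw [hMeq]
    exact Measurable.ite measurableSet_Ici (by fun_prop) measurable_const
  have hbound : ∀ b : ℝ, ‖M b‖ ≤ s / 2 := by
    intro b
    rw [Real.norm_of_nonneg (hMnn b), hM b]
    split_ifs with h
    · have hb0 : 0 ≤ b := le_trans hs0 h
      have h1 : min (b / r) 1 ≤ 1 := min_le_right _ _
      nlinarith [le_min (div_nonneg hb0 hr0.le) (zero_le_one (α := ℝ))]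
    · positivity
  have hint : Integrable M D :=
    (integrable_const (s / 2)).mono' hmeas.aestronglyMeasurable
      (Filter.Eventually.of_forall hbound)
  -- indicator lower bound
  have hind : Integrable ((Set.Ici r).indicator fun _ => s / 2) D :=
    (integrable_const (s / 2)).indicator measurableSet_Ici
  have hle : ∀ x, (Set.Ici r).indicator (fun _ => s / 2) x ≤ M x := by
    intro x
    by_cases hx : x ∈ Set.Ici r
    · rw [Set.indicator_of_mem hx, part1 x hx]
    · rw [Set.indicator_of_notMem hx]; exact hMnn x
  have hInt1 : ∫ x, (Set.Ici r).indicator (fun _ => s / 2) x ∂D ≤ ∫ x, M x ∂D :=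
    integral_mono hind hint hle
  have hIci : s / 4 ≤ ∫ x, (Set.Ici r).indicator (fun _ => s / 2) x ∂D := by
    rw [integral_indicator_const _ measurableSet_Ici, smul_eq_mul]
    have hle1 : D (Set.Ici r) ≤ 1 := prob_le_one
    have htR : (1 : ℝ) / 2 ≤ (D (Set.Ici r)).toReal := by
      have := ENNReal.toReal_mono (ne_top_of_le_ne_top ENNReal.one_ne_top hle1) hmed
      simpa using this
    calc s / 4 = s / 2 * (1 / 2) := by ring
      _ ≤ s / 2 * (D (Set.Ici r)).toReal := by
          exact mul_le_mul_of_nonneg_left htR (by positivity)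
      _ = (D (Set.Ici r)).toReal • (s / 2) := by rw [smul_eq_mul]; ring
  have hfin : s / 4 ≤ ∫ x, M x ∂D := le_trans hIci hInt1
  have hn : (0 : ℝ) ≤ (n : ℝ) := Nat.cast_nonneg n
  calc (n : ℝ) / 4 * s = (n : ℝ) * (s / 4) := by ring
    _ ≤ (n : ℝ) * ∫ x, M x ∂D := mul_le_mul_of_nonneg_left hfin hn
end
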